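/- Let d ≥ 1, let T ⊆ ℝ^d be a nonempty bounded open set, and let k ≥ 0. Denote by V the finite-dimensional real vector space of d-variate real polynomials of total degree at most k+1. For every linear map ℓ : V → ℝ that vanishes on constant polynomials and every c ∈ ℝ, there exists a unique p ∈ V such that ∫_T ∇(p)(x) · ∇(w)(x) dx = ℓ(w) for all w ∈ V and ∫_T p(x) dx = c. (Well-posedness of the local problem defining the scalar potential reconstruction p_T^{k+1}, whose computation requires solving a small linear system on each mesh element.) -/

import Mathlib

set_option maxHeartbeats 1000000
set_option synthInstance.maxHeartbeats 1000000


open MeasureTheory MvPolynomial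

section HHOAux

variable {d : ℕ} {T : Set (Fin d → ℝ)}

/-- Polynomial functions are integrable on bounded sets. -/
lemma hho_integrableOn_eval (hTbdd : Bornology.IsBounded T) (q : MvPolynomial (Fin d) ℝ) :
    IntegrableOn (fun x => eval x q) T volume :=
  ((MvPolynomial.continuous_eval (p := q)).continuousOn.integrableOn_compact
    hTbdd.isCompact_closure).mono_set subset_closure

/-- A polynomial vanishing on a nonempty open set is the zero polynomial. -/
lemma hho_poly_eq_zero (hTopen : IsOpen T) (hTne : T.Nonempty)
    {q : MvPolynomial (Fin d) ℝ} (h : ∀ x ∈ T, eval x q = 0) : q = 0 := by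
  obtain ⟨x0, hx0⟩ := hTne
  have han : AnalyticOnNhd ℝ (fun x : Fin d → ℝ => eval x q) Set.univ :=
    AnalyticOnNhd.eval_continuousLinearMap (ContinuousLinearMap.id ℝ (Fin d → ℝ)) q
  have hev : (fun x : Fin d → ℝ => eval x q) =ᶠ[nhds x0] 0 :=
    Filter.eventually_of_mem (hTopen.mem_nhds hx0) h
  have hz := han.eqOn_zero_of_preconnected_of_eventuallyEq_zero
    isPreconnected_univ (Set.mem_univ x0) hev
  exact MvPolynomial.funext fun x => by simpa using hz (Set.mem_univ x)

lemma hho_coeff_eq_zero {q : MvPolynomial (Fin d) ℝ} {i : Fin d} (h : pderiv i q = 0)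
    {m : Fin d →₀ ℕ} (hm : m i ≠ 0) : coeff m q = 0 := by
  classical
  have h0 : coeff (m - Finsupp.single i 1) (pderiv i q) = (m i : ℝ) * coeff m q := by
    conv_lhs => rw [q.as_sum, map_sum]
    simp only [pderiv_monomial]
    rw [MvPolynomial.coeff_sum]
    have key : ∀ s ∈ q.support,
        coeff (m - Finsupp.single i 1)
          ((monomial (s - Finsupp.single i 1)) (coeff s q * (s i : ℝ))) =
        if s = m then (m i : ℝ) * coeff m q else 0 := by
      intro s _
      rw [coeff_monomial]
      by_cases hs : s - Finsupp.single i 1 = m - Finsupp.single i 1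
      · rw [if_pos hs]
        by_cases hsi : s i = 0
        · have hsm : s ≠ m := fun hsm => hm (hsm ▸ hsi)
          rw [if_neg hsm, hsi]
          simp
        · have hsm : s = m := by
            have h1 : Finsupp.single i 1 ≤ s := by
              rw [Finsupp.single_le_iff]; omega
            have h2 : Finsupp.single i 1 ≤ m := by
              rw [Finsupp.single_le_iff]; omega
            calc s = s - Finsupp.single i 1 + Finsupp.single i 1 :=
                    (tsub_add_cancel_of_le h1).symm
              _ = m - Finsupp.single i 1 + Finsupp.single i 1 := by rw [hs]
              _ = m := tsub_add_cancel_of_le h2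
          rw [if_pos hsm, hsm, mul_comm]
      · rw [if_neg hs, if_neg (fun hsm => hs (by rw [hsm]))]
    rw [Finset.sum_congr rfl key, Finset.sum_ite_eq' q.support m
      (fun _ => (m i : ℝ) * coeff m q)]
    by_cases hmem : m ∈ q.support
    · rw [if_pos hmem]
    · rw [if_neg hmem]
      rw [MvPolynomial.notMem_support_iff] at hmem
      rw [hmem, mul_zero]
  rw [h] at h0
  simp only [coeff_zero] at h0
  have hmi : (m i : ℝ) ≠ 0 := Nat.cast_ne_zero.mpr hm
  exact (mul_eq_zero.mp h0.symm).resolve_left hmi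

/-- A polynomial with vanishing gradient is constant. -/
lemma hho_eq_C {q : MvPolynomial (Fin d) ℝ} (h : ∀ i, pderiv i q = 0) :
    ∃ a : ℝ, q = C a := by
  refine ⟨coeff 0 q, MvPolynomial.ext _ _ fun m => ?_⟩
  rw [coeff_C]
  rcases eq_or_ne m 0 with rfl | hm
  · rw [if_pos rfl]
  · rw [if_neg (fun hh => hm hh.symm)]
    obtain ⟨i, hi⟩ := Finsupp.ne_iff.mp hm
    exact hho_coeff_eq_zero (h i) (by simpa using hi)

lemma hho_int_add (hTbdd : Bornology.IsBounded T) (a b : MvPolynomial (Fin d) ℝ) :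
    ∫ x in T, eval x (a + b) = (∫ x in T, eval x a) + ∫ x in T, eval x b := by
  simp only [map_add]
  exact integral_add (hho_integrableOn_eval hTbdd a) (hho_integrableOn_eval hTbdd b)

lemma hho_int_smul (r : ℝ) (a : MvPolynomial (Fin d) ℝ) :
    ∫ x in T, eval x (r • a) = r * ∫ x in T, eval x a := by
  simp only [MvPolynomial.smul_eval]
  exact integral_const_mul r _

/-- The gradient-product polynomial. -/
noncomputable def hhoGP (p w : MvPolynomial (Fin d) ℝ) : MvPolynomial (Fin d) ℝ :=
  ∑ i : Fin d, pderiv i p * pderiv i w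

lemma hho_integrand_eq (p w : MvPolynomial (Fin d) ℝ) :
    (fun x : Fin d → ℝ => ∑ i : Fin d, eval x (pderiv i p) * eval x (pderiv i w)) =
      fun x => eval x (hhoGP p w) := by
  funext x
  simp [hhoGP, map_sum]

lemma hho_B0_eq (p w : MvPolynomial (Fin d) ℝ) :
    (∫ x in T, ∑ i : Fin d, eval x (pderiv i p) * eval x (pderiv i w)) =
      ∫ x in T, eval x (hhoGP p w) := by
  rw [hho_integrand_eq]

lemma hhoGP_add_left (p p' w : MvPolynomial (Fin d) ℝ) :
    hhoGP (p + p') w = hhoGP p w + hhoGP p' w := by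
  simp [hhoGP, add_mul, Finset.sum_add_distrib]

lemma hhoGP_smul_left (r : ℝ) (p w : MvPolynomial (Fin d) ℝ) :
    hhoGP (r • p) w = r • hhoGP p w := by
  simp [hhoGP, smul_mul_assoc, Finset.smul_sum]

lemma hhoGP_add_right (p w w' : MvPolynomial (Fin d) ℝ) :
    hhoGP p (w + w') = hhoGP p w + hhoGP p w' := by
  simp [hhoGP, mul_add, Finset.sum_add_distrib]

lemma hhoGP_smul_right (r : ℝ) (p w : MvPolynomial (Fin d) ℝ) :
    hhoGP p (r • w) = r • hhoGP p w := by
  simp [hhoGP, mul_smul_comm, Finset.smul_sum]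

end HHOAux

/-- The bilinear form `(p, w) ↦ ∫_T ∇p · ∇w` on polynomials of degree at most `k+1`. -/
noncomputable def hhoB (d k : ℕ) (T : Set (Fin d → ℝ)) (hTbdd : Bornology.IsBounded T) :
    (restrictTotalDegree (Fin d) ℝ (k + 1)) →ₗ[ℝ]
      (restrictTotalDegree (Fin d) ℝ (k + 1)) →ₗ[ℝ] ℝ :=
  LinearMap.mk₂ ℝ
    (fun p w => ∫ x in T, ∑ i : Fin d,
      eval x (pderiv i (p : MvPolynomial (Fin d) ℝ)) *
        eval x (pderiv i (w : MvPolynomial (Fin d) ℝ)))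
    (fun p p' w => by
      rw [hho_B0_eq, hho_B0_eq, hho_B0_eq, Submodule.coe_add, hhoGP_add_left,
        hho_int_add hTbdd])
    (fun r p w => by
      rw [hho_B0_eq, hho_B0_eq, Submodule.coe_smul, hhoGP_smul_left, hho_int_smul]
      rfl)
    (fun p w w' => by
      rw [hho_B0_eq, hho_B0_eq, hho_B0_eq, Submodule.coe_add, hhoGP_add_right,
        hho_int_add hTbdd])
    (fun r p w => by
      rw [hho_B0_eq, hho_B0_eq, Submodule.coe_smul, hhoGP_smul_right, hho_int_smul]
      rfl)

lemma hhoB_apply (d k : ℕ) (T : Set (Fin d → ℝ)) (hTbdd : Bornology.IsBounded T)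
    (p w : restrictTotalDegree (Fin d) ℝ (k + 1)) :
    hhoB d k T hTbdd p w = ∫ x in T, ∑ i : Fin d,
      eval x (pderiv i (p : MvPolynomial (Fin d) ℝ)) *
        eval x (pderiv i (w : MvPolynomial (Fin d) ℝ)) := rfl

/-- The linear functional `p ↦ ∫_T p` on polynomials of degree at most `k+1`. -/
noncomputable def hhoI (d k : ℕ) (T : Set (Fin d → ℝ)) (hTbdd : Bornology.IsBounded T) :
    (restrictTotalDegree (Fin d) ℝ (k + 1)) →ₗ[ℝ] ℝ where
  toFun p := ∫ x in T, eval x (p : MvPolynomial (Fin d) ℝ)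
  map_add' p q := by rw [Submodule.coe_add, hho_int_add hTbdd]
  map_smul' r p := by rw [Submodule.coe_smul, hho_int_smul]; rfl

lemma hhoI_apply (d k : ℕ) (T : Set (Fin d → ℝ)) (hTbdd : Bornology.IsBounded T)
    (p : restrictTotalDegree (Fin d) ℝ (k + 1)) :
    hhoI d k T hTbdd p = ∫ x in T, eval x (p : MvPolynomial (Fin d) ℝ) := rfl

/-- Well-posedness of the local problem defining the scalar potential reconstruction
`p_T^{k+1}` of the HHO method: on a nonempty bounded open set `T ⊆ ℝ^d` (`d ≥ 1`),
for every linear functional `ℓ` on the space `V` of `d`-variate real polynomials of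
total degree at most `k+1` vanishing on constant polynomials, and every `c ∈ ℝ`, there
is a unique `p ∈ V` with `∫_T ∇p · ∇w = ℓ(w)` for all `w ∈ V` and `∫_T p = c`. -/
theorem scalar_potential_reconstruction_wellPosed
    (d k : ℕ) (hd : 1 ≤ d) (T : Set (Fin d → ℝ))
    (hTopen : IsOpen T) (hTne : T.Nonempty) (hTbdd : Bornology.IsBounded T)
    (ℓ : (MvPolynomial.restrictTotalDegree (Fin d) ℝ (k + 1)) →ₗ[ℝ] ℝ)
    (hℓ : ∀ r : MvPolynomial.restrictTotalDegree (Fin d) ℝ (k + 1),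
      (∃ a : ℝ, (r : MvPolynomial (Fin d) ℝ) = MvPolynomial.C a) → ℓ r = 0)
    (c : ℝ) :
    ∃! p : MvPolynomial.restrictTotalDegree (Fin d) ℝ (k + 1),
      (∀ w : MvPolynomial.restrictTotalDegree (Fin d) ℝ (k + 1),
        ∫ x in T, ∑ i : Fin d,
          eval x (pderiv i (p : MvPolynomial (Fin d) ℝ)) *
            eval x (pderiv i (w : MvPolynomial (Fin d) ℝ)) = ℓ w) ∧
      ∫ x in T, eval x (p : MvPolynomial (Fin d) ℝ) = c := by
  classical
  -- the constant polynomial 1 as an element of V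
  have h1mem : (1 : MvPolynomial (Fin d) ℝ) ∈ restrictTotalDegree (Fin d) ℝ (k + 1) := by
    rw [mem_restrictTotalDegree]
    simp [totalDegree_one]
  set e₀ : restrictTotalDegree (Fin d) ℝ (k + 1) := ⟨1, h1mem⟩ with he₀def
  have he₀ : e₀ ≠ 0 := by
    intro h
    exact one_ne_zero (α := MvPolynomial (Fin d) ℝ) (Subtype.ext_iff.mp h)
  -- evaluation at e₀ on the dual space
  set evm : Module.Dual ℝ (restrictTotalDegree (Fin d) ℝ (k + 1)) →ₗ[ℝ] ℝ := LinearMap.applyₗ (R := ℝ) (M₂ := ℝ) e₀ with hevmdef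
  have hevm : ∀ f : Module.Dual ℝ (restrictTotalDegree (Fin d) ℝ (k + 1)), evm f = f e₀ := fun f => rfl
  clear_value evm
  -- a functional taking the value 1 at e₀
  obtain ⟨g, hg⟩ := LinearMap.exists_extend (LinearPMap.mkSpanSingleton (K := ℝ) e₀ (1 : ℝ) he₀).toFun
  have hge : g e₀ = 1 := by
    have h1 := LinearMap.congr_fun hg
      ⟨e₀, Submodule.mem_span_singleton_self e₀⟩
    have h2 := LinearPMap.mkSpanSingleton_apply ℝ ℝ (σ := RingHom.id ℝ) he₀ (1 : ℝ)
    exact h1.trans h2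
  have hsurj : Function.Surjective evm := by
    intro r
    exact ⟨r • g, by rw [hevm, LinearMap.smul_apply, hge, smul_eq_mul, mul_one]⟩
  -- the functional ψ on Dual V × ℝ whose kernel will be the range of Φ
  set ψ : (Module.Dual ℝ (restrictTotalDegree (Fin d) ℝ (k + 1)) × ℝ) →ₗ[ℝ] ℝ :=
    evm.comp (LinearMap.fst ℝ (Module.Dual ℝ (restrictTotalDegree (Fin d) ℝ (k + 1))) ℝ)
    with hψdef
  have hψ : ∀ q : Module.Dual ℝ (restrictTotalDegree (Fin d) ℝ (k + 1)) × ℝ,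
      ψ q = evm q.1 := fun q => rfl
  clear_value ψ
  have hψsurj : Function.Surjective ψ := by
    intro r
    refine ⟨(r • g, 0), ?_⟩
    rw [hψ, hevm, LinearMap.smul_apply, hge, smul_eq_mul, mul_one]
  -- the bilinear form and the integral functional
  set B : restrictTotalDegree (Fin d) ℝ (k + 1) →ₗ[ℝ] restrictTotalDegree (Fin d) ℝ (k + 1) →ₗ[ℝ] ℝ := hhoB d k T hTbdd with hBdef
  set Imap : restrictTotalDegree (Fin d) ℝ (k + 1) →ₗ[ℝ] ℝ := hhoI d k T hTbdd with hIdef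
  -- B p vanishes at e₀
  have hBker : ∀ p : restrictTotalDegree (Fin d) ℝ (k + 1), evm (B p) = 0 := by
    intro p
    rw [hevm, hBdef, hhoB_apply]
    have : (fun x : Fin d → ℝ => ∑ i : Fin d,
        eval x (pderiv i (p : MvPolynomial (Fin d) ℝ)) *
          eval x (pderiv i (e₀ : MvPolynomial (Fin d) ℝ))) = fun _ => 0 := by
      funext x
      simp [he₀def, pderiv_one]
    rw [this]
    simp
  set Φ : restrictTotalDegree (Fin d) ℝ (k + 1) →ₗ[ℝ]
      (Module.Dual ℝ (restrictTotalDegree (Fin d) ℝ (k + 1)) × ℝ) := B.prod Imap with hΦdef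
  -- injectivity of Φ
  have hvolpos : (volume T).toReal ≠ 0 := by
    have hpos : 0 < volume T := hTopen.measure_pos volume hTne
    have hfin : volume T < ⊤ :=
      lt_of_le_of_lt (measure_mono subset_closure)
        hTbdd.isCompact_closure.measure_lt_top
    exact (ENNReal.toReal_pos hpos.ne' hfin.ne).ne'
  have hinjcore : ∀ p : restrictTotalDegree (Fin d) ℝ (k + 1), Φ p = 0 → p = 0 := by
    intro p hp
    have hB0 : B p = 0 := by
      have := congrArg Prod.fst hp
      simpa [hΦdef] using this
    have hI0 : Imap p = 0 := by
      have := congrArg Prod.snd hp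
      simpa [hΦdef] using this
    -- from B p p = 0 deduce that the gradient vanishes on T
    have hpp : (∫ x in T, eval x (hhoGP (p : MvPolynomial (Fin d) ℝ) p)) = 0 := by
      rw [← hho_B0_eq]
      have := LinearMap.congr_fun hB0 p
      rw [hBdef, hhoB_apply] at this
      simpa using this
    have hnn : ∀ x : Fin d → ℝ, 0 ≤ eval x (hhoGP (p : MvPolynomial (Fin d) ℝ) p) := by
      intro x
      rw [hhoGP, map_sum]
      exact Finset.sum_nonneg fun i _ => by rw [map_mul]; exact mul_self_nonneg _
    have hae : (fun x => eval x (hhoGP (p : MvPolynomial (Fin d) ℝ) p))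
        =ᵐ[volume.restrict T] 0 :=
      (integral_eq_zero_iff_of_nonneg (fun x => hnn x)
        (hho_integrableOn_eval hTbdd _)).mp hpp
    have hTz : ∀ x ∈ T, eval x (hhoGP (p : MvPolynomial (Fin d) ℝ) p) = 0 := by
      have h1 : ∀ᵐ x, x ∈ T → eval x (hhoGP (p : MvPolynomial (Fin d) ℝ) p) = 0 :=
        (ae_restrict_iff' hTopen.measurableSet).mp hae
      by_contra hcon
      push_neg at hcon
      obtain ⟨x0, hx0T, hx0⟩ := hcon
      set U := T ∩ {x | eval x (hhoGP (p : MvPolynomial (Fin d) ℝ) p) ≠ 0} with hUdef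
      have hUopen : IsOpen U :=
        hTopen.inter (isOpen_compl_singleton.preimage (MvPolynomial.continuous_eval _))
      have hU0 : volume U = 0 := by
        refine measure_mono_null ?_ h1
        intro x hx
        simp only [hUdef, Set.mem_inter_iff, Set.mem_setOf_eq] at hx
        simp only [Set.mem_setOf_eq]
        tauto
      have : U = ∅ := (hUopen.measure_eq_zero_iff volume).mp hU0
      exact absurd this (Set.nonempty_iff_ne_empty.mp ⟨x0, hx0T, hx0⟩)
    have hEach : ∀ i : Fin d, ∀ x ∈ T,
        eval x (pderiv i (p : MvPolynomial (Fin d) ℝ)) = 0 := by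
      intro i x hx
      have h2 := hTz x hx
      rw [hhoGP, map_sum] at h2
      have h3 := (Finset.sum_eq_zero_iff_of_nonneg
        (fun j _ => by rw [map_mul]; exact mul_self_nonneg _)).mp h2 i (Finset.mem_univ i)
      rw [map_mul] at h3
      exact mul_self_eq_zero.mp h3
    have hpd : ∀ i : Fin d, pderiv i (p : MvPolynomial (Fin d) ℝ) = 0 :=
      fun i => hho_poly_eq_zero hTopen hTne (hEach i)
    obtain ⟨a, ha⟩ := hho_eq_C hpd
    have hIc : a * (volume T).toReal = 0 := by
      have h4 : (∫ x in T, eval x (p : MvPolynomial (Fin d) ℝ)) = 0 := by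
        rw [hIdef, hhoI_apply] at hI0
        exact hI0
      rw [ha] at h4
      simp only [eval_C] at h4
      rw [setIntegral_const, smul_eq_mul, mul_comm] at h4
      exact h4
    have ha0 : a = 0 := (mul_eq_zero.mp hIc).resolve_right hvolpos
    apply Subtype.ext
    rw [ha, ha0, map_zero]
    rfl
  have hinj : Function.Injective Φ :=
    LinearMap.ker_eq_bot.mp (LinearMap.ker_eq_bot'.mpr hinjcore)
  -- range Φ is contained in ker ψ
  have hle : LinearMap.range Φ ≤ LinearMap.ker ψ := by
    rintro q ⟨p, rfl⟩
    rw [LinearMap.mem_ker, hψ, hΦdef]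
    exact hBker p
  -- dimension count
  have hkerψ : Module.finrank ℝ (LinearMap.ker ψ) =
      Module.finrank ℝ (restrictTotalDegree (Fin d) ℝ (k + 1)) := by
    have h1 := LinearMap.finrank_range_add_finrank_ker ψ
    rw [LinearMap.range_eq_top.mpr hψsurj, finrank_top, Module.finrank_self] at h1
    have h2 : Module.finrank ℝ
        (Module.Dual ℝ (restrictTotalDegree (Fin d) ℝ (k + 1)) × ℝ) =
        Module.finrank ℝ (restrictTotalDegree (Fin d) ℝ (k + 1)) + 1 := by
      rw [Module.finrank_prod, Module.finrank_self, Subspace.dual_finrank_eq]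
    omega
  have hrange : Module.finrank ℝ (LinearMap.range Φ) =
      Module.finrank ℝ (restrictTotalDegree (Fin d) ℝ (k + 1)) :=
    LinearMap.finrank_range_of_inj hinj
  have heq : LinearMap.range Φ = LinearMap.ker ψ :=
    Submodule.eq_of_le_of_finrank_le hle (by omega)
  -- solve the problem
  have hℓ0 : evm ℓ = 0 := by
    rw [hevm]
    exact hℓ e₀ ⟨1, by rw [he₀def]; exact (MvPolynomial.C_1).symm⟩
  have hmem : (ℓ, c) ∈ LinearMap.ker ψ := by
    rw [LinearMap.mem_ker, hψ]
    exact hℓ0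
  rw [← heq] at hmem
  obtain ⟨p, hp⟩ := hmem
  have hp1 : B p = ℓ := by
    have := congrArg Prod.fst hp
    simpa [hΦdef] using this
  have hp2 : (∫ x in T, eval x (p : MvPolynomial (Fin d) ℝ)) = c := by
    have := congrArg Prod.snd hp
    simp only [hΦdef, LinearMap.prod_apply, Function.prod] at this
    rw [hIdef, hhoI_apply] at this
    exact this
  refine ⟨p, ⟨fun w => ?_, hp2⟩, ?_⟩
  · have := LinearMap.congr_fun hp1 w
    rw [hBdef, hhoB_apply] at this
    exact this
  · rintro p' ⟨h1, h2⟩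
    apply hinj
    rw [hp]
    have hfst : B p' = ℓ := by
      apply LinearMap.ext
      intro w
      rw [hBdef, hhoB_apply]
      exact h1 w
    have hsnd : Imap p' = c := by
      rw [hIdef, hhoI_apply]
      exact h2
    rw [hΦdef]
    exact Prod.ext hfst hsnd
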